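/- Let E and F be complex Banach spaces, v ∈ E, ℓ > 0, L > 0, and let f : E → F be analytic (holomorphic) on the open ball B(v,ℓ) and satisfy ‖f(z) − f(z')‖ ≤ L‖z − z'‖ for all z, z' ∈ B(v,ℓ). Then for every h ∈ E with ‖h‖ ≤ ℓ/4: ‖f(v+h) − f(v) − Df(v)(h)‖ ≤ 2L‖h‖²/ℓ, where Df(v) denotes the Fréchet derivative of f at v. -/

import Mathlib

open MeasureTheory Set

/-- quantitative first-order Taylor estimate for a holomorphic
and Lipschitz function on a ball in a complex Banach space. -/
theorem stmt_11
    {E F : Type*} [NormedAddCommGroup E] [NormedSpace ℂ E]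
    [NormedAddCommGroup F] [NormedSpace ℂ F]
    (v : E) (ℓ L : ℝ) (hℓ : 0 < ℓ) (hL : 0 < L)
    (f : E → F)
    (hf : AnalyticOnNhd ℂ f (Metric.ball v ℓ))
    (hlip : ∀ z ∈ Metric.ball v ℓ, ∀ z' ∈ Metric.ball v ℓ,
      ‖f z - f z'‖ ≤ L * ‖z - z'‖) :
    ∀ h : E, ‖h‖ ≤ ℓ / 4 →
      ‖f (v + h) - f v - fderiv ℂ f v h‖ ≤ 2 * L * ‖h‖ ^ 2 / ℓ := by
  intro h hh
  rcases eq_or_ne h 0 with rfl | hne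
  · simp only [add_zero, sub_self, map_zero, norm_zero, sub_zero, norm_zero]
    positivity
  have hnorm : (0:ℝ) < ‖h‖ := norm_pos_iff.2 hne
  set ι : F →L[ℂ] UniformSpace.Completion F := UniformSpace.Completion.toComplL with hι
  have hιnorm : ∀ x : F, ‖ι x‖ = ‖x‖ := fun x => UniformSpace.Completion.norm_coe x
  set r : NNReal := ⟨3 * ℓ / (4 * ‖h‖), by positivity⟩ with hrdef
  have hrcoe : (r : ℝ) = 3 * ℓ / (4 * ‖h‖) := rfl
  have hr3 : (3:ℝ) ≤ r := by
    rw [hrcoe, le_div_iff₀ (by positivity)]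
    nlinarith
  have hrpos : 0 < r := by
    have : (0:ℝ) < r := lt_of_lt_of_le (by norm_num) hr3
    exact_mod_cast this
  have hrh : (r : ℝ) * ‖h‖ = 3 * ℓ / 4 := by
    rw [hrcoe]; field_simp
  set g : ℂ → UniformSpace.Completion F := fun z => ι (f (v + z • h)) - ι (f v) with hgdef
  have hmem : ∀ z : ℂ, ‖z‖ ≤ r → v + z • h ∈ Metric.ball v ℓ := by
    intro z hz
    rw [Metric.mem_ball, dist_eq_norm, add_sub_cancel_left, norm_smul]
    calc ‖z‖ * ‖h‖ ≤ (r:ℝ) * ‖h‖ := by gcongr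
    _ = 3 * ℓ / 4 := hrh
    _ < ℓ := by linarith
  have hgdiff : DifferentiableOn ℂ g (Metric.closedBall 0 r) := by
    intro z hz
    rw [Metric.mem_closedBall, dist_zero_right] at hz
    have h1 : DifferentiableAt ℂ (fun z : ℂ => v + z • h) z :=
      (differentiableAt_id.smul_const h).const_add v
    have h2 : DifferentiableAt ℂ f (v + z • h) :=
      (hf _ (hmem z hz)).differentiableAt
    exact (((ι.differentiable.differentiableAt.comp z (h2.comp z h1)).sub_const
      (ι (f v)))).differentiableWithinAt
  have hp := hgdiff.hasFPowerSeriesOnBall hrpos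
  set p := cauchyPowerSeries g 0 r with hpdef
  -- bound on coefficients
  have hgbound : ∀ θ : ℝ, ‖g (circleMap 0 r θ)‖ ≤ L * (3 * ℓ / 4) := by
    intro θ
    have habs : ‖circleMap 0 r θ‖ = r := by
      rw [norm_circleMap_zero, abs_of_nonneg r.coe_nonneg]
    have hmem' := hmem _ habs.le
    have hg1 : g (circleMap 0 r θ) = ι (f (v + circleMap 0 r θ • h) - f v) := by
      rw [hgdef]; simp [map_sub]
    rw [hg1, hιnorm]
    calc ‖f (v + circleMap 0 r θ • h) - f v‖
        ≤ L * ‖(v + circleMap 0 r θ • h) - v‖ :=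
          hlip _ hmem' _ (Metric.mem_ball_self hℓ)
      _ = L * (‖circleMap 0 r θ‖ * ‖h‖) := by
          rw [add_sub_cancel_left, norm_smul]
      _ = L * (3 * ℓ / 4) := by rw [habs, hrh]
  have hpn : ∀ n, ‖p n‖ ≤ L * (3 * ℓ / 4) * ((r:ℝ)⁻¹) ^ n := by
    intro n
    refine (norm_cauchyPowerSeries_le g 0 r n).trans ?_
    rw [abs_of_nonneg r.coe_nonneg]
    have hInt : (∫ θ : ℝ in (0:ℝ)..2 * Real.pi, ‖g (circleMap 0 (r:ℝ) θ)‖)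
        ≤ L * (3 * ℓ / 4) * (2 * Real.pi) := by
      have h2 := intervalIntegral.norm_integral_le_of_norm_le_const
        (C := L * (3 * ℓ / 4)) (f := fun θ => ‖g (circleMap 0 (r:ℝ) θ)‖)
        (a := (0:ℝ)) (b := 2 * Real.pi) (fun θ _ => by simpa using hgbound θ)
      rw [Real.norm_eq_abs] at h2
      calc (∫ θ : ℝ in (0:ℝ)..2 * Real.pi, ‖g (circleMap 0 (r:ℝ) θ)‖)
          ≤ |∫ θ : ℝ in (0:ℝ)..2 * Real.pi, ‖g (circleMap 0 (r:ℝ) θ)‖| := le_abs_self _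
        _ ≤ L * (3 * ℓ / 4) * |2 * Real.pi - 0| := h2
        _ = L * (3 * ℓ / 4) * (2 * Real.pi) := by
            rw [sub_zero, abs_of_pos Real.two_pi_pos]
    have hfront : (2 * Real.pi)⁻¹ * (∫ θ : ℝ in (0:ℝ)..2 * Real.pi, ‖g (circleMap 0 (r:ℝ) θ)‖)
        ≤ L * (3 * ℓ / 4) := by
      rw [← div_eq_inv_mul, div_le_iff₀ Real.two_pi_pos]
      linarith [hInt]
    exact mul_le_mul_of_nonneg_right hfront (pow_nonneg (inv_nonneg.2 r.coe_nonneg) n)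
  -- sum at 1
  have h1mem : (1:ℂ) ∈ Metric.eball (0:ℂ) r := by
    rw [Metric.emetric_ball_nnreal, Metric.mem_ball, dist_zero_right]
    simpa using lt_of_lt_of_le (by norm_num : (1:ℝ) < 3) hr3
  have hsum : HasSum (fun n => p n fun _ => (1:ℂ)) (g 1) := by
    have := hp.hasSum h1mem
    simpa using this
  have hA : HasSum (fun n => p (n + 2) fun _ => (1:ℂ))
      (g 1 - ((p 0 fun _ => (1:ℂ)) + (p 1 fun _ => (1:ℂ)))) := by
    have := (hasSum_nat_add_iff' (f := fun n => p n fun _ => (1:ℂ)) 2).2 hsum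
    rw [Finset.sum_range_succ, Finset.sum_range_one] at this
    exact this
  -- geometric bound
  have hrinv0 : (0:ℝ) ≤ (r:ℝ)⁻¹ := inv_nonneg.2 r.coe_nonneg
  have hrpos' : (0:ℝ) < r := lt_of_lt_of_le (by norm_num) hr3
  have hrinv1 : (r:ℝ)⁻¹ < 1 := by
    rw [inv_lt_one_iff₀]
    right; linarith
  have hB : HasSum (fun n : ℕ => (L * (3 * ℓ / 4) * ((r:ℝ)⁻¹) ^ 2) * ((r:ℝ)⁻¹) ^ n)
      ((L * (3 * ℓ / 4) * ((r:ℝ)⁻¹) ^ 2) * (1 - (r:ℝ)⁻¹)⁻¹) :=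
    (hasSum_geometric_of_lt_one hrinv0 hrinv1).mul_left _
  have hAB : ∀ n : ℕ, ‖p (n + 2) fun _ => (1:ℂ)‖ ≤
      (L * (3 * ℓ / 4) * ((r:ℝ)⁻¹) ^ 2) * ((r:ℝ)⁻¹) ^ n := by
    intro n
    calc ‖p (n + 2) fun _ => (1:ℂ)‖ ≤ ‖p (n + 2)‖ * ∏ _i : Fin (n+2), ‖(1:ℂ)‖ :=
          (p (n + 2)).le_opNorm _
      _ = ‖p (n + 2)‖ := by simp
      _ ≤ L * (3 * ℓ / 4) * ((r:ℝ)⁻¹) ^ (n + 2) := hpn (n + 2)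
      _ = (L * (3 * ℓ / 4) * ((r:ℝ)⁻¹) ^ 2) * ((r:ℝ)⁻¹) ^ n := by ring
  have key : ‖g 1 - ((p 0 fun _ => (1:ℂ)) + (p 1 fun _ => (1:ℂ)))‖
      ≤ 2 * L * ‖h‖ ^ 2 / ℓ := by
    refine (hA.norm_le_of_bounded hB hAB).trans ?_
    have hrinv : (r:ℝ)⁻¹ = 4 * ‖h‖ / (3 * ℓ) := by
      rw [hrcoe, inv_div]
    have hden : (0:ℝ) < 3 * ℓ - 4 * ‖h‖ := by linarith
    have e2 : 1 - (r:ℝ)⁻¹ = (3 * ℓ - 4 * ‖h‖) / (3 * ℓ) := by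
      rw [hrinv, one_sub_div (by positivity : (3:ℝ) * ℓ ≠ 0)]
    rw [e2, hrinv, inv_div]
    have e3 : L * (3 * ℓ / 4) * (4 * ‖h‖ / (3 * ℓ)) ^ 2 * (3 * ℓ / (3 * ℓ - 4 * ‖h‖))
        = 4 * L * ‖h‖ ^ 2 / (3 * ℓ - 4 * ‖h‖) := by
      field_simp
    rw [e3, div_le_div_iff₀ hden hℓ]
    nlinarith [mul_nonneg (mul_pos hL (pow_pos hnorm 2)).le
      (by linarith : (0:ℝ) ≤ ℓ - 4 * ‖h‖)]
  -- identify the terms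
  have hcoeff0 : (p 0 fun _ => (1:ℂ)) = 0 := by
    have h0 := hp.coeff_zero (fun _ => (1:ℂ))
    rw [h0]
    show ι (f (v + (0:ℂ) • h)) - ι (f v) = 0
    rw [zero_smul, add_zero, sub_self]
  have hfdiff : DifferentiableAt ℂ f v := (hf v (Metric.mem_ball_self hℓ)).differentiableAt
  have hline : HasDerivAt (fun z : ℂ => v + z • h) h 0 := by
    simpa using ((hasDerivAt_id (0:ℂ)).smul_const h).const_add v
  have hfd' : HasFDerivAt f (fderiv ℂ f v) ((fun z : ℂ => v + z • h) 0) := by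
    simpa using hfdiff.hasFDerivAt
  have hc : HasDerivAt (fun z : ℂ => f (v + z • h)) (fderiv ℂ f v h) 0 :=
    hfd'.comp_hasDerivAt 0 hline
  have hgderiv : HasDerivAt g (ι (fderiv ℂ f v h)) 0 := by
    rw [hgdef]
    exact ((ι.hasFDerivAt.comp_hasDerivAt 0 hc)).sub_const (ι (f v))
  have hcoeff1 : (p 1 fun _ => (1:ℂ)) = ι (fderiv ℂ f v h) := by
    have hd : deriv g 0 = p.coeff 1 := hp.hasFPowerSeriesAt.deriv
    have : p.coeff 1 = (p 1 fun _ => (1:ℂ)) := rfl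
    rw [← this, ← hd, hgderiv.deriv]
  have hiota : g 1 - ((p 0 fun _ => (1:ℂ)) + (p 1 fun _ => (1:ℂ)))
      = ι (f (v + h) - f v - fderiv ℂ f v h) := by
    rw [hcoeff0, hcoeff1, hgdef]
    simp [map_sub]
  rw [hiota, hιnorm] at key
  exact key
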